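/- arXiv:1410.3327 — 3 statements merged into one kernel-verified Lean document; each statement's English description precedes it below -/
import Mathlib

section
/- In the filtered graded Poisson algebra X₀ with filtration F^p X₀ by the ideal generated by degree-≥p elements: (a) {F^p X₀^1, F^q X₀^1} ⊆ F^{max(p,q)} X₀ if p ≠ q, and ⊆ F^{p+1} X₀ if p = q; (b) {F^p X₀, X₀^m} ⊆ F^p X₀ for m ≥ 0; (c) {F^p X₀^n, X₀^m} ⊆ F^{p - max(|n|,|m|)} X₀^{n+m}. -/
/-- The filtration ideal `F^p X₀`: the ideal generated by homogeneous elements of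
degree at least `p` in the graded algebra `X₀` with grading `𝒳`. -/
noncomputable def Filt {X : Type*} [CommRing X] [Algebra ℝ X]
    (𝒳 : ℤ → Submodule ℝ X) (p : ℤ) : Ideal X :=
  Ideal.span {x : X | ∃ i : ℤ, p ≤ i ∧ x ∈ 𝒳 i}

variable {X : Type*} [CommRing X] [Algebra ℝ X]

section Aux
variable (𝒳 : ℤ → Submodule ℝ X)

lemma mem_filt {p i : ℤ} (h : p ≤ i) {x : X} (hx : x ∈ 𝒳 i) : x ∈ Filt 𝒳 p :=
  Ideal.subset_span ⟨i, h, hx⟩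

lemma filt_mono {p q : ℤ} (h : p ≤ q) : Filt 𝒳 q ≤ Filt 𝒳 p :=
  Ideal.span_mono fun _ ⟨i, hi, hx⟩ => ⟨i, h.trans hi, hx⟩

lemma filt_smul {p : ℤ} (r : ℝ) {x : X} (hx : x ∈ Filt 𝒳 p) : r • x ∈ Filt 𝒳 p := by
  rw [Algebra.smul_def]; exact Ideal.mul_mem_left _ _ hx

def homProd (p : ℤ) : Set X :=
  {x | ∃ k i : ℤ, p ≤ i ∧ ∃ a ∈ 𝒳 k, ∃ g ∈ 𝒳 i, x = a * g}

def homProd1 (p : ℤ) : Set X :=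
  {x | ∃ i : ℤ, p ≤ i ∧ ∃ a ∈ 𝒳 (1 - i), ∃ g ∈ 𝒳 i, x = a * g}

variable [GradedAlgebra 𝒳]

open scoped Classical in
lemma mul_mem_span_homProd (p : ℤ) (c : X) {x : X}
    (hx : x ∈ Submodule.span ℝ (homProd 𝒳 p)) :
    c * x ∈ Submodule.span ℝ (homProd 𝒳 p) := by
  induction hx using Submodule.span_induction with
  | mem x hx =>
    obtain ⟨k, i, hi, a, ha, g, hg, rfl⟩ := hx
    have : c * (a * g) = ∑ l ∈ (DirectSum.decompose 𝒳 (c * a)).support,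
        ((DirectSum.decompose 𝒳 (c * a) l : X) * g) := by
      rw [← Finset.sum_mul, DirectSum.sum_support_decompose, mul_assoc]
    rw [this]
    exact Submodule.sum_mem _ fun l _ => Submodule.subset_span
      ⟨l, i, hi, _, (DirectSum.decompose 𝒳 (c * a) l).2, g, hg, rfl⟩
  | zero => simp
  | add x y _ _ hx hy => rw [mul_add]; exact Submodule.add_mem _ hx hy
  | smul r x _ hx => rw [mul_smul_comm]; exact Submodule.smul_mem _ _ hx

lemma filt_le_span_homProd (p : ℤ) {x : X} (hx : x ∈ Filt 𝒳 p) :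
    x ∈ Submodule.span ℝ (homProd 𝒳 p) := by
  induction hx using Submodule.span_induction with
  | mem x hx =>
    obtain ⟨i, hi, hxi⟩ := hx
    exact Submodule.subset_span ⟨0, i, hi, 1, SetLike.one_mem_graded 𝒳, x, hxi, (one_mul x).symm⟩
  | zero => exact Submodule.zero_mem _
  | add x y _ _ hx hy => exact Submodule.add_mem _ hx hy
  | smul c x _ hx => exact mul_mem_span_homProd 𝒳 p c hx

variable {B : X →ₗ[ℝ] X →ₗ[ℝ] X}

lemma masterLemma
    (hdeg : ∀ i j : ℤ, ∀ x ∈ 𝒳 i, ∀ y ∈ 𝒳 j, B x y ∈ 𝒳 (i + j))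
    (hskew : ∀ i j : ℤ, ∀ x ∈ 𝒳 i, ∀ y ∈ 𝒳 j,
      B x y = - (((-1 : ℝ) ^ (i * j)) • B y x))
    (hleib : ∀ i j : ℤ, ∀ x ∈ 𝒳 i, ∀ y ∈ 𝒳 j, ∀ z : X,
      B x (y * z) = B x y * z + ((-1 : ℝ) ^ (i * j)) • (y * B x z))
    {p j : ℤ} {y : X} (hy : y ∈ 𝒳 j) {x : X} (hx : x ∈ Filt 𝒳 p) :
    B x y ∈ Filt 𝒳 (p + min j 0) := by
  have hx' := filt_le_span_homProd 𝒳 p hx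
  clear hx
  induction hx' using Submodule.span_induction with
  | mem x hx =>
    obtain ⟨k, i, hi, a, ha, g, hg, rfl⟩ := hx
    have hag : a * g ∈ 𝒳 (k + i) := SetLike.mul_mem_graded ha hg
    rw [hskew _ _ _ hag _ hy, hleib _ _ _ hy _ ha g]
    refine Submodule.neg_mem _ (filt_smul 𝒳 _ (Submodule.add_mem _ ?_ ?_))
    · exact filt_mono 𝒳 (by omega) (Ideal.mul_mem_left _ _ (mem_filt 𝒳 hi hg))
    · exact filt_smul 𝒳 _ (Ideal.mul_mem_left _ _
        (mem_filt 𝒳 (by omega) (hdeg _ _ _ hy _ hg)))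
  | zero => simp
  | add x₁ x₂ _ _ h₁ h₂ => rw [map_add, LinearMap.add_apply]; exact Submodule.add_mem _ h₁ h₂
  | smul r x₁ _ h₁ => rw [map_smul, LinearMap.smul_apply]; exact filt_smul 𝒳 _ h₁

lemma filt_deg_one_le_span (p : ℤ) {x : X} (hx : x ∈ Filt 𝒳 p) (hx1 : x ∈ 𝒳 1) :
    x ∈ Submodule.span ℝ (homProd1 𝒳 p) := by
  have hx' := filt_le_span_homProd 𝒳 p hx
  have key : ∀ z, z ∈ Submodule.span ℝ (homProd 𝒳 p) →
      ((DirectSum.decompose 𝒳 z 1 : 𝒳 1) : X) ∈ Submodule.span ℝ (homProd1 𝒳 p) := by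
    intro z hz
    induction hz using Submodule.span_induction with
    | mem z hz =>
      obtain ⟨k, i, hi, a, ha, g, hg, rfl⟩ := hz
      have hag : a * g ∈ 𝒳 (k + i) := SetLike.mul_mem_graded ha hg
      by_cases h : k + i = 1
      · rw [h] at hag
        rw [DirectSum.decompose_of_mem_same 𝒳 hag]
        exact Submodule.subset_span
          ⟨i, hi, a, by rwa [show (1 : ℤ) - i = k by omega], g, hg, rfl⟩
      · rw [DirectSum.decompose_of_mem_ne 𝒳 hag h]
        simp
    | zero => simp
    | add z₁ z₂ _ _ h₁ h₂ =>
      rw [DirectSum.decompose_add, DirectSum.add_apply, Submodule.coe_add]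
      exact Submodule.add_mem _ h₁ h₂
    | smul r z₁ _ h₁ =>
      rw [DirectSum.decompose_smul, DirectSum.smul_apply, Submodule.coe_smul]
      exact Submodule.smul_mem _ _ h₁
  have := key x hx'
  rwa [DirectSum.decompose_of_mem_same 𝒳 hx1] at this

end Aux

section SL
variable (𝒳 : ℤ → Submodule ℝ X) [GradedAlgebra 𝒳] {B : X →ₗ[ℝ] X →ₗ[ℝ] X}

lemma strongLemma
    (hdeg : ∀ i j : ℤ, ∀ x ∈ 𝒳 i, ∀ y ∈ 𝒳 j, B x y ∈ 𝒳 (i + j))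
    (hskew : ∀ i j : ℤ, ∀ x ∈ 𝒳 i, ∀ y ∈ 𝒳 j,
      B x y = - (((-1 : ℝ) ^ (i * j)) • B y x))
    (hleib : ∀ i j : ℤ, ∀ x ∈ 𝒳 i, ∀ y ∈ 𝒳 j, ∀ z : X,
      B x (y * z) = B x y * z + ((-1 : ℝ) ^ (i * j)) • (y * B x z))
    {p : ℤ} (hp : 1 ≤ p) {x y : X}
    (hx : x ∈ Submodule.span ℝ (homProd1 𝒳 p))
    (hy : y ∈ Submodule.span ℝ (homProd1 𝒳 p)) :
    B x y ∈ Filt 𝒳 (p + 1) := by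
  induction hx, hy using Submodule.span_induction₂ with
  | mem_mem x y hx hy =>
    obtain ⟨i, hi, a, ha, g, hg, rfl⟩ := hx
    obtain ⟨s, hs, b, hb, h, hh, rfl⟩ := hy
    have hag : a * g ∈ 𝒳 1 := by
      have := SetLike.mul_mem_graded ha hg
      rwa [sub_add_cancel] at this
    have e1 : B (a*g) (b*h) = B (a*g) b * h + ((-1:ℝ)^(1*(1-s))) • (b * B (a*g) h) :=
      hleib 1 (1-s) _ hag b hb h
    have e2 : B (a*g) b = -(((-1:ℝ)^(1*(1-s))) • B b (a*g)) := hskew 1 (1-s) _ hag b hb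
    have e3 : B b (a*g) = B b a * g + ((-1:ℝ)^((1-s)*(1-i))) • (a * B b g) :=
      hleib (1-s) (1-i) b hb a ha g
    have e4 : B (a*g) h = -(((-1:ℝ)^(1*s)) • B h (a*g)) := hskew 1 s _ hag h hh
    have e5 : B h (a*g) = B h a * g + ((-1:ℝ)^(s*(1-i))) • (a * B h g) :=
      hleib s (1-i) h hh a ha g
    rw [e1, e2, e3, e4, e5]
    refine Submodule.add_mem _ ?_ (filt_smul 𝒳 _ ?_)
    · rw [neg_mul, smul_mul_assoc, add_mul, smul_mul_assoc]
      refine Submodule.neg_mem _ (filt_smul 𝒳 _ (Submodule.add_mem _ ?_ (filt_smul 𝒳 _ ?_)))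
      · rw [mul_assoc]
        exact Ideal.mul_mem_left _ _ (mem_filt 𝒳 (by omega) (SetLike.mul_mem_graded hg hh))
      · rw [mul_assoc]
        exact Ideal.mul_mem_left _ _ (mem_filt 𝒳 (by omega)
          (SetLike.mul_mem_graded (hdeg _ _ _ hb _ hg) hh))
    · rw [mul_neg, mul_smul_comm]
      refine Submodule.neg_mem _ (filt_smul 𝒳 _ ?_)
      rw [mul_add, mul_smul_comm]
      refine Submodule.add_mem _ ?_ (filt_smul 𝒳 _ ?_)
      · exact Ideal.mul_mem_left _ _ (mem_filt 𝒳 (by omega)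
          (SetLike.mul_mem_graded (hdeg _ _ _ hh _ ha) hg))
      · exact Ideal.mul_mem_left _ _ (Ideal.mul_mem_left _ _
          (mem_filt 𝒳 (by omega) (hdeg _ _ _ hh _ hg)))
  | zero_left y hy => simp
  | zero_right x hx => simp
  | add_left x₁ x₂ z _ _ _ h₁ h₂ =>
    rw [map_add, LinearMap.add_apply]; exact Submodule.add_mem _ h₁ h₂
  | add_right x₁ z₁ z₂ _ _ _ h₁ h₂ =>
    rw [map_add]; exact Submodule.add_mem _ h₁ h₂
  | smul_left r x₁ z _ _ h₁ =>
    rw [map_smul, LinearMap.smul_apply]; exact filt_smul 𝒳 _ h₁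
  | smul_right r x₁ z _ _ h₁ =>
    rw [map_smul]; exact filt_smul 𝒳 _ h₁

end SL

/-- in the filtered graded Poisson algebra `X₀` with the filtration by
ideals `F^p X₀` generated by degree-≥p elements:
(a) `{F^p X₀¹, F^q X₀¹} ⊆ F^{max(p,q)} X₀` if `p ≠ q` and `⊆ F^{p+1} X₀` if `p = q`;
(b) `{F^p X₀, X₀^m} ⊆ F^p X₀` for `m ≥ 0`;
(c) `{F^p X₀ⁿ, X₀^m} ∪ {X₀ⁿ, F^p X₀^m} ⊆ F^{p - max(|n|,|m|)} X₀^{n+m}`. -/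
theorem stmt_4
    (𝒳 : ℤ → Submodule ℝ X) [GradedAlgebra 𝒳]
    (B : X →ₗ[ℝ] X →ₗ[ℝ] X)
    (hdeg : ∀ i j : ℤ, ∀ x ∈ 𝒳 i, ∀ y ∈ 𝒳 j, B x y ∈ 𝒳 (i + j))
    (hskew : ∀ i j : ℤ, ∀ x ∈ 𝒳 i, ∀ y ∈ 𝒳 j,
      B x y = - (((-1 : ℝ) ^ (i * j)) • B y x))
    (hleib : ∀ i j : ℤ, ∀ x ∈ 𝒳 i, ∀ y ∈ 𝒳 j, ∀ z : X,
      B x (y * z) = B x y * z + ((-1 : ℝ) ^ (i * j)) • (y * B x z)) :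
    -- (a)
    (∀ p q : ℕ, ∀ x, x ∈ Filt 𝒳 (p : ℤ) → x ∈ 𝒳 1 →
      ∀ y, y ∈ Filt 𝒳 (q : ℤ) → y ∈ 𝒳 1 →
      B x y ∈ Filt 𝒳 (if p = q then (p : ℤ) + 1 else max (p : ℤ) (q : ℤ))) ∧
    -- (b)
    (∀ (p : ℕ) (m : ℤ), 0 ≤ m → ∀ x ∈ Filt 𝒳 (p : ℤ), ∀ y ∈ 𝒳 m,
      B x y ∈ Filt 𝒳 (p : ℤ)) ∧
    -- (c)
    (∀ (p : ℕ) (n m : ℤ),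
      (∀ x, x ∈ Filt 𝒳 (p : ℤ) → x ∈ 𝒳 n → ∀ y ∈ 𝒳 m,
        B x y ∈ Filt 𝒳 ((p : ℤ) - max |n| |m|)) ∧
      (∀ x ∈ 𝒳 n, ∀ y, y ∈ Filt 𝒳 (p : ℤ) → y ∈ 𝒳 m →
        B x y ∈ Filt 𝒳 ((p : ℤ) - max |n| |m|))) := by
  refine ⟨?_, ?_, ?_⟩
  · -- (a)
    intro p q x hxF hx1 y hyF hy1
    split_ifs with hpq
    · -- p = q
      subst hpq
      rcases Nat.eq_zero_or_pos p with h0 | hp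
      · subst h0
        exact mem_filt 𝒳 (by norm_num) (hdeg 1 1 x hx1 y hy1)
      · exact strongLemma 𝒳 hdeg hskew hleib (by exact_mod_cast hp)
          (filt_deg_one_le_span 𝒳 _ hxF hx1) (filt_deg_one_le_span 𝒳 _ hyF hy1)
    · -- p ≠ q
      have h1 : B x y ∈ Filt 𝒳 (p : ℤ) := by
        have := masterLemma 𝒳 hdeg hskew hleib hy1 hxF
        simpa using this
      have h2 : B x y ∈ Filt 𝒳 (q : ℤ) := by
        have hm := masterLemma 𝒳 hdeg hskew hleib hx1 hyF
        rw [hskew 1 1 x hx1 y hy1]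
        refine Submodule.neg_mem _ (filt_smul 𝒳 _ ?_)
        simpa using hm
      rcases max_cases (p : ℤ) (q : ℤ) with ⟨he, _⟩ | ⟨he, _⟩ <;> rw [he] <;> assumption
  · -- (b)
    intro p m hm x hx y hy
    have := masterLemma 𝒳 hdeg hskew hleib hy hx
    rwa [min_eq_right hm, add_zero] at this
  · -- (c)
    intro p n m
    have habs : (p : ℤ) - max |n| |m| ≤ (p : ℤ) + min m 0 ∧
        (p : ℤ) - max |n| |m| ≤ (p : ℤ) + min n 0 := by
      have h1 := neg_abs_le m
      have h2 := neg_abs_le n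
      have h3 := le_max_right |n| |m|
      have h4 := le_max_left |n| |m|
      have h5 := abs_nonneg n
      have h6 := abs_nonneg m
      omega
    constructor
    · intro x hxF _ y hy
      exact filt_mono 𝒳 habs.1 (masterLemma 𝒳 hdeg hskew hleib hy hxF)
    · intro x hx y hyF hy
      rw [hskew n m x hx y hy]
      exact Submodule.neg_mem _ (filt_smul 𝒳 _
        (filt_mono 𝒳 habs.2 (masterLemma 𝒳 hdeg hskew hleib hx hyF)))
end

section
/- In P = ℝ[x₁,x₂,y₁,y₂] with {xᵢ,yⱼ} = δᵢⱼ and J = (x₁y₂ − x₂y₁): the elements a = x₁² + x₂² and b = y₁² + y₂² satisfy {a, μ} ∈ J and {b, μ} ∈ J (so they define classes in (P/J)^J), but {a,b} = 4(x₁y₁ + x₂y₂) does not belong to J. Hence the induced Poisson bracket on (P/J)^J is nonzero. -/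
open MvPolynomial

/-- The canonical Poisson bracket on `P = ℝ[x₁,x₂,y₁,y₂]`, with `x i = X (inl i)`,
`y i = X (inr i)`, determined by `{xᵢ, yⱼ} = δᵢⱼ`, `{xᵢ,xⱼ} = {yᵢ,yⱼ} = 0`. -/
noncomputable def pb (f g : MvPolynomial (Fin 2 ⊕ Fin 2) ℝ) :
    MvPolynomial (Fin 2 ⊕ Fin 2) ℝ :=
  ∑ i : Fin 2,
    (pderiv (Sum.inl i) f * pderiv (Sum.inr i) g -
      pderiv (Sum.inr i) f * pderiv (Sum.inl i) g)

/-- The angular momentum `μ = x₁y₂ − x₂y₁`. -/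
noncomputable def μpoly : MvPolynomial (Fin 2 ⊕ Fin 2) ℝ :=
  X (Sum.inl 0) * X (Sum.inr 1) - X (Sum.inl 1) * X (Sum.inr 0)

/-- `a = x₁² + x₂²` and `b = y₁² + y₂²` satisfy `{a,μ} ∈ J` and
`{b,μ} ∈ J` (so they define classes in `(P/J)^J`), but
`{a,b} = 4(x₁y₁ + x₂y₂) ∉ J`; hence the induced bracket on `(P/J)^J` is nonzero. -/
theorem stmt_11 :
    let a : MvPolynomial (Fin 2 ⊕ Fin 2) ℝ := X (Sum.inl 0) ^ 2 + X (Sum.inl 1) ^ 2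
    let b : MvPolynomial (Fin 2 ⊕ Fin 2) ℝ := X (Sum.inr 0) ^ 2 + X (Sum.inr 1) ^ 2
    pb a μpoly ∈ Ideal.span {μpoly} ∧
    pb b μpoly ∈ Ideal.span {μpoly} ∧
    pb a b = 4 * (X (Sum.inl 0) * X (Sum.inr 0) + X (Sum.inl 1) * X (Sum.inr 1)) ∧
    pb a b ∉ Ideal.span {μpoly} := by
  intro a b
  have h1 : pb a μpoly = 0 := by
    simp [pb, μpoly, a, Fin.sum_univ_two, pderiv_X]
    ring
  have h2 : pb b μpoly = 0 := by
    simp [pb, μpoly, b, Fin.sum_univ_two, pderiv_X]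
    ring
  have h3 : pb a b = 4 * (X (Sum.inl 0) * X (Sum.inr 0) + X (Sum.inl 1) * X (Sum.inr 1)) := by
    simp [pb, a, b, Fin.sum_univ_two, pderiv_X]
    ring
  refine ⟨h1 ▸ Ideal.zero_mem _, h2 ▸ Ideal.zero_mem _, h3, ?_⟩
  intro hmem
  rw [Ideal.mem_span_singleton] at hmem
  obtain ⟨c, hc⟩ := hmem
  have := congrArg (eval (fun v => if v = Sum.inl 0 ∨ v = Sum.inr 0 then (1:ℝ) else 0)) hc
  simp [h3, μpoly] at this
end

section
/- Let (X,d) be a complete filtered cochain complex with filtration X = F⁰X ⊇ F¹X ⊇ ⋯, d(F^pX) ⊆ F^pX, and X^n = lim_← X^n/F^pX^n. Suppose that for every p, H^j(F^pX/F^{p+1}X, d) = 0 for all j ≠ p (cohomology of the associated graded concentrated on the diagonal). Then H^j(F^pX, d) = 0 whenever j < p. Consequently the cohomology of X is concentrated in non-negative degrees. -/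
/-- let `(X,d)` be a complete filtered graded cochain complex
(`F 0 = ⊤ ⊇ F 1 ⊇ ⋯`, `d(F p) ⊆ F p`, `d` of degree `+1` with respect to the grading
`𝒳`, the filtration separated and complete: infinite sums `Σ yₗ` with `yₗ ∈ F l`
converge, and the graded pieces `𝒳 j` are closed under such limits).  If for every `p`
the cohomology of the associated graded `F p X/F (p+1) X` vanishes outside degree `p`,
then `H^j(F p X, d) = 0` whenever `j < p`; consequently the cohomology of `X` is
concentrated in non-negative degrees. -/
theorem stmt_15 {X : Type*} [AddCommGroup X] [Module ℝ X]
    (𝒳 : ℤ → Submodule ℝ X)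
    (F : ℕ → Submodule ℝ X)
    (hF0 : F 0 = ⊤) (hFmono : ∀ p, F (p + 1) ≤ F p)
    (hsep : ∀ x : X, (∀ p, x ∈ F p) → x = 0)
    (hcomplete : ∀ y : ℕ → X, (∀ l, y l ∈ F l) →
      ∃ s : X, ∀ p : ℕ, s - (∑ l ∈ Finset.range p, y l) ∈ F p)
    (hclosed : ∀ (j : ℤ) (y : ℕ → X) (s : X), (∀ l, y l ∈ 𝒳 j) →
      (∀ p : ℕ, s - (∑ l ∈ Finset.range p, y l) ∈ F p) → s ∈ 𝒳 j)
    (d : X →ₗ[ℝ] X)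
    (hddeg : ∀ j : ℤ, ∀ x ∈ 𝒳 j, d x ∈ 𝒳 (j + 1))
    (hdF : ∀ p : ℕ, ∀ x ∈ F p, d x ∈ F p)
    (hdd : ∀ x, d (d x) = 0)
    (hgr : ∀ (p : ℕ) (j : ℤ), j ≠ (p : ℤ) → ∀ x : X, x ∈ F p → x ∈ 𝒳 j →
      d x ∈ F (p + 1) →
      ∃ y : X, y ∈ F p ∧ y ∈ 𝒳 (j - 1) ∧ x - d y ∈ F (p + 1)) :
    (∀ (p : ℕ) (j : ℤ), j < (p : ℤ) → ∀ x : X, x ∈ F p → x ∈ 𝒳 j → d x = 0 →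
      ∃ y : X, y ∈ F p ∧ y ∈ 𝒳 (j - 1) ∧ d y = x) ∧
    (∀ j : ℤ, j < 0 → ∀ x ∈ 𝒳 j, d x = 0 → ∃ y ∈ 𝒳 (j - 1), d y = x) := by
  have hanti : Antitone F := antitone_nat_of_succ_le hFmono
  have main : ∀ (p : ℕ) (j : ℤ), j < (p : ℤ) → ∀ x : X, x ∈ F p → x ∈ 𝒳 j → d x = 0 →
      ∃ y : X, y ∈ F p ∧ y ∈ 𝒳 (j - 1) ∧ d y = x := by
    intro p j hj x hxF hxG hdx
    have step : ∀ (l : ℕ) (z : X), z ∈ F (p + l) → z ∈ 𝒳 j → d z = 0 →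
        ∃ y : X, (y ∈ F (p + l) ∧ y ∈ 𝒳 (j - 1)) ∧
          ((z - d y ∈ F (p + l + 1)) ∧ (z - d y) ∈ 𝒳 j ∧ d (z - d y) = 0) := by
      intro l z hzF hzG hdz
      have hne : j ≠ ((p + l : ℕ) : ℤ) := by push_cast; omega
      obtain ⟨y, hyF, hyG, hcor⟩ := hgr (p + l) j hne z hzF hzG
        (by rw [hdz]; exact (F (p + l + 1)).zero_mem)
      refine ⟨y, ⟨hyF, hyG⟩, hcor, ?_, ?_⟩
      · have h2 : d y ∈ 𝒳 j := by simpa using hddeg (j - 1) y hyG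
        exact Submodule.sub_mem _ hzG h2
      · simp [map_sub, hdz, hdd]
    choose Y hY using step
    have hYF := fun l z h1 h2 h3 => (hY l z h1 h2 h3).1.1
    have hYG := fun l z h1 h2 h3 => (hY l z h1 h2 h3).1.2
    have hF' := fun l z h1 h2 h3 => (hY l z h1 h2 h3).2.1
    have hG' := fun l z h1 h2 h3 => (hY l z h1 h2 h3).2.2.1
    have hd' := fun l z h1 h2 h3 => (hY l z h1 h2 h3).2.2.2
    let seq : ∀ l : ℕ, {z : X // z ∈ F (p + l) ∧ z ∈ 𝒳 j ∧ d z = 0} :=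
      fun l => Nat.rec ⟨x, hxF, hxG, hdx⟩
        (fun l ih => ⟨ih.1 - d (Y l ih.1 ih.2.1 ih.2.2.1 ih.2.2.2),
          hF' l ih.1 ih.2.1 ih.2.2.1 ih.2.2.2,
          hG' l ih.1 ih.2.1 ih.2.2.1 ih.2.2.2,
          hd' l ih.1 ih.2.1 ih.2.2.1 ih.2.2.2⟩) l
    let yy : ℕ → X := fun l =>
      Y l (seq l).1 (seq l).2.1 (seq l).2.2.1 (seq l).2.2.2
    have hyyF : ∀ l, yy l ∈ F (p + l) :=
      fun l => hYF l (seq l).1 (seq l).2.1 (seq l).2.2.1 (seq l).2.2.2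
    have hyyG : ∀ l, yy l ∈ 𝒳 (j - 1) :=
      fun l => hYG l (seq l).1 (seq l).2.1 (seq l).2.2.1 (seq l).2.2.2
    have hseqsucc : ∀ l, (seq (l + 1)).1 = (seq l).1 - d (yy l) := fun l => by simp only [seq, yy]
    have htel : ∀ n, (seq n).1 = x - ∑ l ∈ Finset.range n, d (yy l) := by
      intro n
      induction n with
      | zero => simp [seq]
      | succ n ih =>
        rw [hseqsucc, ih, Finset.sum_range_succ]
        abel
    obtain ⟨s, hs⟩ := hcomplete yy (fun l => hanti (Nat.le_add_left l p) (hyyF l))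
    have hsG : s ∈ 𝒳 (j - 1) := hclosed (j - 1) yy s hyyG hs
    have hsF : s ∈ F p := by
      have h1 : s - ∑ l ∈ Finset.range p, yy l ∈ F p := hs p
      have h2 : ∑ l ∈ Finset.range p, yy l ∈ F p :=
        Submodule.sum_mem _ (fun l _ => hanti (Nat.le_add_right p l) (hyyF l))
      simpa using Submodule.add_mem _ h1 h2
    refine ⟨s, hsF, hsG, ?_⟩
    have key : ∀ n : ℕ, d s - x ∈ F n := by
      intro n
      have h1 : d (s - ∑ l ∈ Finset.range n, yy l) ∈ F n := hdF n _ (hs n)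
      have h2 : (seq n).1 ∈ F n := hanti (Nat.le_add_left n p) (seq n).2.1
      have heq : d s - x =
          d (s - ∑ l ∈ Finset.range n, yy l) - (seq n).1 := by
        rw [htel n, map_sub, map_sum]
        abel
      rw [heq]
      exact Submodule.sub_mem _ h1 h2
    have := hsep (d s - x) key
    exact sub_eq_zero.mp this
  refine ⟨main, ?_⟩
  intro j hj x hxG hdx
  obtain ⟨y, _, hyG, hdy⟩ := main 0 j (by exact_mod_cast hj) x (by simp [hF0]) hxG hdx
  exact ⟨y, hyG, hdy⟩
end
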